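/- arXiv:math/0004041 — 2 statements merged into one kernel-verified Lean document; each statement's English description precedes it below -/
import Mathlib

section
/- Given a short exact sequence of finite-dimensional Lie algebras 0 → a → b → h → 0 where each Lie algebra decomposes as center plus semisimple part, the semisimple parts form a short exact sequence 0 → a_ss → b_ss → h_ss → 0, and similarly the centers form a short exact sequence 0 → z(a) → z(b) → z(h) → 0. -/
set_option linter.unnecessarySimpa false

theorem aux_abelian_ideal_le_center {L : Type*} [LieRing L] [LieAlgebra ℝ L]
    (hc : IsCompl (LieAlgebra.center ℝ L) ⁅(⊤ : LieIdeal ℝ L), (⊤ : LieIdeal ℝ L)⁆)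
    (hss : LieAlgebra.IsSemisimple ℝ
      (↥(⁅(⊤ : LieIdeal ℝ L), (⊤ : LieIdeal ℝ L)⁆ : LieIdeal ℝ L)))
    (I : LieIdeal ℝ L) (habel : ∀ x ∈ I, ∀ y ∈ I, ⁅x, y⁆ = (0 : L)) :
    I ≤ LieAlgebra.center ℝ L := by
  set s : LieIdeal ℝ L := ⁅(⊤ : LieIdeal ℝ L), (⊤ : LieIdeal ℝ L)⁆ with hs
  have hcent : ∀ c ∈ LieAlgebra.center ℝ L, ∀ z : L, ⁅z, c⁆ = 0 := by
    intro c hcmem z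
    exact (LieModule.mem_maxTrivSubmodule ℝ L L c).mp hcmem z
  have hcent' : ∀ c ∈ LieAlgebra.center ℝ L, ∀ z : L, ⁅c, z⁆ = 0 := by
    intro c hcmem z
    rw [← lie_skew, hcent c hcmem z, neg_zero]
  let J : LieIdeal ℝ (↥s) :=
  { carrier := {y : ↥s | ∃ c ∈ LieAlgebra.center ℝ L, c + (y : L) ∈ I}
    add_mem' := by
      rintro y₁ y₂ ⟨c₁, hc₁, h₁⟩ ⟨c₂, hc₂, h₂⟩
      refine ⟨c₁ + c₂, add_mem hc₁ hc₂, ?_⟩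
      have : c₁ + c₂ + ((y₁ + y₂ : ↥s) : L) = (c₁ + (y₁ : L)) + (c₂ + (y₂ : L)) := by
        push_cast; abel
      rw [this]; exact add_mem h₁ h₂
    zero_mem' := ⟨0, zero_mem _, by simpa using zero_mem I⟩
    smul_mem' := by
      rintro r y ⟨c, hcm, hI⟩
      refine ⟨r • c, Submodule.smul_mem _ r hcm, ?_⟩
      have : r • c + ((r • y : ↥s) : L) = r • (c + (y : L)) := by
        push_cast; rw [smul_add]
      rw [this]; exact Submodule.smul_mem _ r hI
    lie_mem := by
      rintro w y ⟨c, hcm, hI⟩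
      refine ⟨0, zero_mem _, ?_⟩
      have h1 : ((⁅w, y⁆ : ↥s) : L) = ⁅(w : L), (y : L)⁆ := rfl
      have h2 : ⁅(w : L), c + (y : L)⁆ = ⁅(w : L), (y : L)⁆ := by
        rw [lie_add, hcent c hcm, zero_add]
      rw [zero_add, h1, ← h2]
      exact I.lie_mem hI }
  have hJab : IsLieAbelian (↥J) := by
    constructor
    rintro ⟨x, cx, hcx, hx⟩ ⟨y, cy, hcy, hy⟩
    apply Subtype.ext; apply Subtype.ext
    have : ((((⁅(⟨x, cx, hcx, hx⟩ : ↥J), (⟨y, cy, hcy, hy⟩ : ↥J)⁆ : ↥J) : ↥s)) : L)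
        = ⁅(x : L), (y : L)⁆ := rfl
    rw [this]
    have h0 : ⁅cx + (x : L), cy + (y : L)⁆ = 0 := habel _ hx _ hy
    rw [lie_add, add_lie, add_lie, hcent' cx hcx, hcent cy hcy, hcent' cx hcx] at h0
    simpa using h0
  haveI := hss
  haveI : LieAlgebra.IsSolvable (↥J) := LieAlgebra.ofAbelianIsSolvable _
  have hJbot : J = ⊥ := LieAlgebra.HasTrivialRadical.eq_bot_of_isSolvable J
  intro x hx
  have hxtop : x ∈ LieAlgebra.center ℝ L ⊔ s := by
    rw [hc.codisjoint.eq_top]; exact LieSubmodule.mem_top x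
  obtain ⟨cc, hcc, y, hy, hsum⟩ := (LieSubmodule.mem_sup _ _ x).mp hxtop
  have hyJ : (⟨y, hy⟩ : ↥s) ∈ J := ⟨cc, hcc, by rwa [hsum]⟩
  rw [hJbot, LieSubmodule.mem_bot] at hyJ
  have : y = 0 := by simpa using congrArg (fun z : ↥s => (z : L)) hyJ
  rw [← hsum, this, add_zero]
  exact hcc



/-- **Exactness of centers and semisimple parts.**
Let `0 → a → b → h → 0` be a short exact sequence of finite-dimensional real Lie algebras,
given by a surjective homomorphism `μ : b → h` with kernel `a = ker μ`.  Assume each of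
`b`, `h` and `a` is the direct sum of its center and its (semisimple) derived ideal, as is
the case for Lie algebras of compact Lie groups.  Then `μ` maps the center of `b` onto the
center of `h`, with kernel (inside the center of `b`) the center of `a`, and maps the
derived (semisimple) part of `b` onto that of `h`, with kernel the semisimple part of `a`. -/
theorem exactness_of_centers_and_semisimple_parts
    {b : Type*} [LieRing b] [LieAlgebra ℝ b] [Module.Finite ℝ b]
    {h : Type*} [LieRing h] [LieAlgebra ℝ h] [Module.Finite ℝ h]
    (μ : b →ₗ⁅ℝ⁆ h) (hμ : Function.Surjective μ)
    (hb : IsCompl (LieAlgebra.center ℝ b) ⁅(⊤ : LieIdeal ℝ b), (⊤ : LieIdeal ℝ b)⁆)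
    (hbss : LieAlgebra.IsSemisimple ℝ
      (↥(⁅(⊤ : LieIdeal ℝ b), (⊤ : LieIdeal ℝ b)⁆ : LieIdeal ℝ b)))
    (hh : IsCompl (LieAlgebra.center ℝ h) ⁅(⊤ : LieIdeal ℝ h), (⊤ : LieIdeal ℝ h)⁆)
    (hhss : LieAlgebra.IsSemisimple ℝ
      (↥(⁅(⊤ : LieIdeal ℝ h), (⊤ : LieIdeal ℝ h)⁆ : LieIdeal ℝ h)))
    (ha : IsCompl (LieAlgebra.center ℝ (↥μ.ker))
      ⁅(⊤ : LieIdeal ℝ (↥μ.ker)), (⊤ : LieIdeal ℝ (↥μ.ker))⁆)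
    (hass : LieAlgebra.IsSemisimple ℝ
      (↥(⁅(⊤ : LieIdeal ℝ (↥μ.ker)), (⊤ : LieIdeal ℝ (↥μ.ker))⁆ : LieIdeal ℝ (↥μ.ker)))) :
    -- the centers form a short exact sequence `0 → z(a) → z(b) → z(h) → 0`:
    LieIdeal.map μ (LieAlgebra.center ℝ b) = LieAlgebra.center ℝ h ∧
    (∀ x : μ.ker, (x ∈ LieAlgebra.center ℝ (↥μ.ker) ↔
      (x : b) ∈ LieAlgebra.center ℝ b)) ∧
    -- the semisimple parts form a short exact sequence `0 → a_ss → b_ss → h_ss → 0`: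
    LieIdeal.map μ ⁅(⊤ : LieIdeal ℝ b), (⊤ : LieIdeal ℝ b)⁆
      = ⁅(⊤ : LieIdeal ℝ h), (⊤ : LieIdeal ℝ h)⁆ ∧
    (∀ x : μ.ker, (x ∈ (⁅(⊤ : LieIdeal ℝ (↥μ.ker)), (⊤ : LieIdeal ℝ (↥μ.ker))⁆ :
        LieIdeal ℝ (↥μ.ker)) ↔
      (x : b) ∈ (⁅(⊤ : LieIdeal ℝ b), (⊤ : LieIdeal ℝ b)⁆ : LieIdeal ℝ b))) := by
  -- Part (3): μ maps [b,b] onto [h,h]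
  have h3 : LieIdeal.map μ ⁅(⊤ : LieIdeal ℝ b), (⊤ : LieIdeal ℝ b)⁆
      = ⁅(⊤ : LieIdeal ℝ h), (⊤ : LieIdeal ℝ h)⁆ := by
    rw [LieIdeal.map_bracket_eq μ hμ]
    have htop : LieIdeal.map μ (⊤ : LieIdeal ℝ b) = ⊤ := by
      rw [← LieHom.idealRange_eq_map, μ.idealRange_eq_top_of_surjective hμ]
    rw [htop]
  -- The ideal of b consisting of elements of a = ker μ centralizing a
  let Iz : LieIdeal ℝ b :=
  { carrier := {x : b | x ∈ μ.ker ∧ ∀ y ∈ μ.ker, ⁅x, y⁆ = 0}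
    add_mem' := by
      rintro x₁ x₂ ⟨h₁, h₁'⟩ ⟨h₂, h₂'⟩
      exact ⟨add_mem h₁ h₂, fun y hy => by rw [add_lie, h₁' y hy, h₂' y hy, add_zero]⟩
    zero_mem' := ⟨zero_mem _, fun y _ => zero_lie y⟩
    smul_mem' := by
      rintro r x ⟨h1, h2⟩
      exact ⟨Submodule.smul_mem _ r h1, fun y hy => by rw [smul_lie, h2 y hy, smul_zero]⟩
    lie_mem := by
      rintro z x ⟨h1, h2⟩
      refine ⟨μ.ker.lie_mem h1, fun y hy => ?_⟩
      rw [lie_lie, h2 y hy, lie_zero, h2 _ (μ.ker.lie_mem hy), zero_sub, neg_zero] }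
  have habel : ∀ x ∈ Iz, ∀ y ∈ Iz, ⁅x, y⁆ = (0 : b) := fun x hx y hy => hx.2 y hy.1
  have hIz : Iz ≤ LieAlgebra.center ℝ b := aux_abelian_ideal_le_center hb hbss Iz habel
  -- Part (2)
  have h2 : ∀ x : μ.ker, (x ∈ LieAlgebra.center ℝ (↥μ.ker) ↔
      (x : b) ∈ LieAlgebra.center ℝ b) := by
    intro x
    constructor
    · intro hx
      apply hIz
      refine ⟨x.2, fun y hy => ?_⟩
      have h0 := (LieModule.mem_maxTrivSubmodule ℝ (↥μ.ker) (↥μ.ker) x).mp hx ⟨y, hy⟩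
      have h1 : ⁅y, (x : b)⁆ = 0 := congrArg (fun z : ↥μ.ker => (z : b)) h0
      rw [← lie_skew, h1, neg_zero]
    · intro hx
      rw [LieModule.mem_maxTrivSubmodule]
      intro z
      apply Subtype.ext
      show ⁅(z : b), (x : b)⁆ = 0
      exact (LieModule.mem_maxTrivSubmodule ℝ b b (x : b)).mp hx (z : b)
  -- Part (4) forward
  have h4fwd : ∀ x : μ.ker, x ∈ (⁅(⊤ : LieIdeal ℝ (↥μ.ker)), (⊤ : LieIdeal ℝ (↥μ.ker))⁆ :
      LieIdeal ℝ (↥μ.ker)) → (x : b) ∈ (⁅(⊤ : LieIdeal ℝ b), (⊤ : LieIdeal ℝ b)⁆ :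
      LieIdeal ℝ b) := by
    have hle : (⁅(⊤ : LieIdeal ℝ (↥μ.ker)), (⊤ : LieIdeal ℝ (↥μ.ker))⁆ : LieIdeal ℝ (↥μ.ker))
        ≤ LieIdeal.comap μ.ker.incl ⁅(⊤ : LieIdeal ℝ b), (⊤ : LieIdeal ℝ b)⁆ := by
      rw [LieSubmodule.lie_le_iff]
      intro x _ m _
      rw [LieIdeal.mem_comap]
      show ⁅(x : b), (m : b)⁆ ∈ _
      exact LieSubmodule.lie_mem_lie (LieSubmodule.mem_top _) (LieSubmodule.mem_top _)
    intro x hx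
    have := hle hx
    rwa [LieIdeal.mem_comap] at this
  -- Part (4)
  have h4 : ∀ x : μ.ker, (x ∈ (⁅(⊤ : LieIdeal ℝ (↥μ.ker)), (⊤ : LieIdeal ℝ (↥μ.ker))⁆ :
      LieIdeal ℝ (↥μ.ker)) ↔
      (x : b) ∈ (⁅(⊤ : LieIdeal ℝ b), (⊤ : LieIdeal ℝ b)⁆ : LieIdeal ℝ b)) := by
    intro x
    refine ⟨h4fwd x, fun hx => ?_⟩
    have hxtop : x ∈ LieAlgebra.center ℝ (↥μ.ker)
        ⊔ ⁅(⊤ : LieIdeal ℝ (↥μ.ker)), (⊤ : LieIdeal ℝ (↥μ.ker))⁆ := by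
      rw [ha.codisjoint.eq_top]; exact LieSubmodule.mem_top x
    obtain ⟨u, hu, v, hv, huv⟩ := (LieSubmodule.mem_sup _ _ x).mp hxtop
    have hub : (u : b) ∈ LieAlgebra.center ℝ b := (h2 u).mp hu
    have hvb : (v : b) ∈ (⁅(⊤ : LieIdeal ℝ b), (⊤ : LieIdeal ℝ b)⁆ : LieIdeal ℝ b) := h4fwd v hv
    have hueq : (u : b) = (x : b) - (v : b) := by
      rw [← huv]; push_cast; abel
    have hub2 : (u : b) ∈ (⁅(⊤ : LieIdeal ℝ b), (⊤ : LieIdeal ℝ b)⁆ : LieIdeal ℝ b) := by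
      rw [hueq]; exact sub_mem hx hvb
    have hu0 : (u : b) ∈ (⊥ : LieIdeal ℝ b) := by
      rw [← hb.inf_eq_bot]
      exact ⟨hub, hub2⟩
    rw [LieSubmodule.mem_bot] at hu0
    have hu0' : u = 0 := Subtype.ext hu0
    rw [← huv, hu0', zero_add]
    exact hv
  -- Part (1)
  have h1le : LieIdeal.map μ (LieAlgebra.center ℝ b) ≤ LieAlgebra.center ℝ h := by
    rw [LieIdeal.map_le_iff_le_comap]
    intro x hx
    rw [LieIdeal.mem_comap, LieModule.mem_maxTrivSubmodule]
    intro z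
    obtain ⟨w, rfl⟩ := hμ z
    rw [← μ.map_lie, (LieModule.mem_maxTrivSubmodule ℝ b b x).mp hx w, map_zero μ]
  have h1 : LieIdeal.map μ (LieAlgebra.center ℝ b) = LieAlgebra.center ℝ h := by
    refine le_antisymm h1le ?_
    intro y hy
    obtain ⟨x, rfl⟩ := hμ y
    have hxtop : x ∈ LieAlgebra.center ℝ b ⊔ ⁅(⊤ : LieIdeal ℝ b), (⊤ : LieIdeal ℝ b)⁆ := by
      rw [hb.codisjoint.eq_top]; exact LieSubmodule.mem_top x
    obtain ⟨c, hc, s, hs, rfl⟩ := (LieSubmodule.mem_sup _ _ x).mp hxtop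
    have hμc : μ c ∈ LieIdeal.map μ (LieAlgebra.center ℝ b) := LieIdeal.mem_map hc
    have hμccen : μ c ∈ LieAlgebra.center ℝ h := h1le hμc
    have hμs : μ s ∈ (⁅(⊤ : LieIdeal ℝ h), (⊤ : LieIdeal ℝ h)⁆ : LieIdeal ℝ h) := by
      rw [← h3]; exact LieIdeal.mem_map hs
    have hμscen : μ s ∈ LieAlgebra.center ℝ h := by
      have : μ s = μ (c + s) - μ c := by rw [map_add μ]; abel
      rw [this]; exact sub_mem hy hμccen
    have hμs0 : μ s ∈ (⊥ : LieIdeal ℝ h) := by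
      rw [← hh.inf_eq_bot]; exact ⟨hμscen, hμs⟩
    rw [LieSubmodule.mem_bot] at hμs0
    have : μ (c + s) = μ c := by rw [map_add μ, hμs0, add_zero]
    rw [this]
    exact hμc
  exact ⟨h1, h2, h3, h4⟩
end

section
/- If f ∈ L^p(Ω₁) for an open set Ω₁ ⊆ ℝⁿ depends only on the first d coordinates, and Ω₂ is open with compact closure contained in Ω₁, then f ∈ L^p_d(Ω₂) with ‖f‖_{L^p_d(Ω₂)} ≤ c ‖f‖_{L^p(Ω₁)} for a constant c depending only on Ω₁, Ω₂, n, d, p. -/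
open MeasureTheory Metric
open scoped ENNReal

/-- The Morrey norm `‖f‖_{L^p_d(Ω)}` on a subset `Ω ⊆ ℝⁿ`:
`‖f‖_{L^p_d(Ω)}^p = ‖f‖_{L^p(Ω)}^p + sup_{ρ∈(0,1]} sup_x ρ^{d−n} ‖f‖_{L^p(B_ρ(x)∩Ω)}^p`. -/
noncomputable def morreyNormOn (n : ℕ) (p d : ℝ) (Ω : Set (EuclideanSpace ℝ (Fin n)))
    (f : EuclideanSpace ℝ (Fin n) → ℝ) : ℝ≥0∞ :=
  (eLpNorm f (ENNReal.ofReal p) (volume.restrict Ω) ^ p +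
    ⨆ (ρ : ℝ) (_ : ρ ∈ Set.Ioc (0 : ℝ) 1) (x : EuclideanSpace ℝ (Fin n)),
      ENNReal.ofReal (ρ ^ (d - n)) *
        eLpNorm f (ENNReal.ofReal p) ((volume.restrict Ω).restrict (ball x ρ)) ^ p) ^ (1 / p)

set_option maxHeartbeats 1000000


lemma coord_le_norm (n : ℕ) (x : EuclideanSpace ℝ (Fin n)) (i : Fin n) : |x i| ≤ ‖x‖ := by
  rw [EuclideanSpace.norm_eq]
  have h : |x i| = Real.sqrt (‖x i‖ ^ 2) := by
    rw [Real.sqrt_sq_eq_abs]; simp [abs_abs]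
  rw [h]
  exact Real.sqrt_le_sqrt (Finset.single_le_sum (f := fun j => ‖x j‖ ^ 2)
    (fun j _ => by positivity) (Finset.mem_univ i))

lemma key_ball (n d : ℕ) (hd : d ≤ n) (p ε : ℝ) (hε : 0 < ε)
    (Ω₁ Ω₂ : Set (EuclideanSpace ℝ (Fin n))) (hΩ₂ : IsOpen Ω₂)
    (hthick : Metric.thickening ε (closure Ω₂) ⊆ Ω₁)
    (f : EuclideanSpace ℝ (Fin n) → ℝ)
    (hf : ∀ x y : EuclideanSpace ℝ (Fin n),
        (∀ i : Fin n, (i : ℕ) < d → x i = y i) → f x = f y)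
    (ρ : ℝ) (hρ : 0 < ρ) (x : EuclideanSpace ℝ (Fin n)) :
    ENNReal.ofReal (ρ ^ ((d : ℝ) - n)) * ∫⁻ z in ball x ρ ∩ Ω₂, (‖f z‖₊ : ℝ≥0∞) ^ p ≤
      ENNReal.ofReal ((4 * Real.sqrt n / ε) ^ (n - d)) *
        ∫⁻ z in Ω₁, (‖f z‖₊ : ℝ≥0∞) ^ p := by
  set g : EuclideanSpace ℝ (Fin n) → ℝ≥0∞ := fun z => (‖f z‖₊ : ℝ≥0∞) ^ p with hg
  have hsub₂ : ball x ρ ∩ Ω₂ ⊆ Ω₁ := by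
    intro z hz
    exact hthick (Metric.self_subset_thickening hε _ (subset_closure hz.2))
  rcases Nat.eq_or_lt_of_le hd with heq | hlt
  · have h1 : ((d : ℝ) - n) = 0 := by rw [heq]; ring
    have h2 : n - d = 0 := by omega
    rw [h1, h2, Real.rpow_zero, pow_zero, ENNReal.ofReal_one, one_mul, one_mul]
    exact lintegral_mono_set hsub₂
  · set k := n - d with hk
    have hk1 : 1 ≤ k := by omega
    have hn1 : 1 ≤ n := by omega
    set s := Real.sqrt n with hs
    have hs0 : 0 < s := Real.sqrt_pos.mpr (by exact_mod_cast hn1)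
    -- choose the number of grid points
    obtain ⟨m, hm1, hub, hρm⟩ : ∃ m : ℕ, 1 ≤ m ∧ s * (2 * ρ * ((m : ℝ) - 1)) ≤ ε / 2 ∧
        ε / (4 * s) ≤ ρ * m := by
      set t := ε / (4 * ρ * s) with ht
      have ht0 : 0 ≤ t := by positivity
      refine ⟨Nat.floor t + 1, by omega, ?_, ?_⟩
      · have h1 : ((Nat.floor t + 1 : ℕ) : ℝ) - 1 ≤ t := by
          have := Nat.floor_le ht0
          push_cast; linarith
        have h2 : s * (2 * ρ * t) = ε / 2 := by rw [ht]; field_simp; ring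
        have h3 : s * (2 * ρ * (((Nat.floor t + 1 : ℕ) : ℝ) - 1)) ≤ s * (2 * ρ * t) := by
          apply mul_le_mul_of_nonneg_left _ (Real.sqrt_nonneg _)
          apply mul_le_mul_of_nonneg_left h1 (by positivity)
        linarith
      · have h1 : t < ((Nat.floor t + 1 : ℕ) : ℝ) := by
          have := Nat.lt_floor_add_one t
          push_cast; linarith
        have h2 : ρ * t = ε / (4 * s) := by rw [ht]; field_simp
        nlinarith
    -- the translation vectors
    set v : (Fin k → Fin m) → EuclideanSpace ℝ (Fin n) := fun j =>
      WithLp.toLp 2 (fun i : Fin n => if h : d ≤ (i : ℕ) then (2 * ρ) * ((j ⟨(i : ℕ) - d, by have := i.isLt; omega⟩ : ℕ) : ℝ)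
        else 0) with hv
    have hv0 : ∀ j (i : Fin n), (i : ℕ) < d → v j i = 0 := by
      intro j i hi
      simp only [hv, WithLp.ofLp_toLp]
      rw [dif_neg (by omega)]
    have hvco : ∀ j (i : Fin n) (h : d ≤ (i : ℕ)),
        v j i = (2 * ρ) * ((j ⟨(i : ℕ) - d, by have := i.isLt; omega⟩ : ℕ) : ℝ) := by
      intro j i h
      simp only [hv, WithLp.ofLp_toLp]
      rw [dif_pos h]
    have hM0 : (0:ℝ) ≤ 2 * ρ * ((m : ℝ) - 1) := by
      have : (1:ℝ) ≤ (m:ℝ) := by exact_mod_cast hm1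
      have h2ρ : (0:ℝ) ≤ 2 * ρ := by linarith
      nlinarith
    have hvbd : ∀ j (i : Fin n), |v j i| ≤ 2 * ρ * ((m : ℝ) - 1) := by
      intro j i
      by_cases h : d ≤ (i : ℕ)
      · rw [hvco j i h, abs_of_nonneg (by positivity)]
        have hlt' : ((j ⟨(i : ℕ) - d, by have := i.isLt; omega⟩ : ℕ) : ℝ) + 1 ≤ (m : ℝ) := by
          exact_mod_cast (j ⟨(i : ℕ) - d, by have := i.isLt; omega⟩).isLt
        nlinarith
      · rw [hv0 j i (by omega), abs_zero]
        exact hM0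
    have hnorm : ∀ j, ‖v j‖ ≤ ε / 2 := by
      intro j
      have h1 : ‖v j‖ ≤ s * (2 * ρ * ((m : ℝ) - 1)) := by
        rw [EuclideanSpace.norm_eq]
        have hb : ∀ i : Fin n, ‖v j i‖ ^ 2 ≤ (2 * ρ * ((m : ℝ) - 1)) ^ 2 := by
          intro i
          rw [Real.norm_eq_abs]
          exact pow_le_pow_left₀ (abs_nonneg _) (hvbd j i) 2
        calc Real.sqrt (∑ i, ‖v j i‖ ^ 2) ≤ Real.sqrt (n * (2 * ρ * ((m : ℝ) - 1)) ^ 2) := by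
              apply Real.sqrt_le_sqrt
              calc ∑ i, ‖v j i‖ ^ 2 ≤ ∑ _i : Fin n, (2 * ρ * ((m : ℝ) - 1)) ^ 2 :=
                    Finset.sum_le_sum fun i _ => hb i
                _ = n * (2 * ρ * ((m : ℝ) - 1)) ^ 2 := by
                    rw [Finset.sum_const]; simp [mul_comm]
          _ = s * (2 * ρ * ((m : ℝ) - 1)) := by
              rw [Real.sqrt_mul (by positivity), Real.sqrt_sq hM0]
      linarith [hub]
    have hsep : ∀ j j' : Fin k → Fin m, j ≠ j' → 2 * ρ ≤ ‖v j - v j'‖ := by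
      intro j j' hne
      obtain ⟨a, ha⟩ := Function.ne_iff.mp hne
      set i₀ : Fin n := ⟨d + (a : ℕ), by have := a.isLt; omega⟩ with hi₀
      have hle : d ≤ (i₀ : ℕ) := Nat.le_add_right d a
      have hval : (i₀ : ℕ) = d + (a : ℕ) := rfl
      have hidx : (⟨(i₀ : ℕ) - d, by have := i₀.isLt; omega⟩ : Fin k) = a := by
        apply Fin.ext
        simp only [Fin.val_mk, hval]
        omega
      have hco : (v j - v j') i₀ = 2 * ρ * (((j a : ℕ) : ℝ) - ((j' a : ℕ) : ℝ)) := by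
        have h1 : (v j - v j') i₀ = v j i₀ - v j' i₀ := by simp
        rw [h1, hvco j i₀ hle, hvco j' i₀ hle, hidx]
        ring
      have habs : (1 : ℝ) ≤ |((j a : ℕ) : ℝ) - ((j' a : ℕ) : ℝ)| := by
        have hZ : (1 : ℤ) ≤ |((j a : ℕ) : ℤ) - ((j' a : ℕ) : ℤ)| := by
          have h0 : (j a : ℕ) ≠ (j' a : ℕ) := fun h => ha (Fin.ext h)
          have h1 : ((j a : ℕ) : ℤ) - ((j' a : ℕ) : ℤ) ≠ 0 := by
            intro h; apply h0; omega
          exact Int.one_le_abs h1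
        calc (1 : ℝ) ≤ ((|((j a : ℕ) : ℤ) - ((j' a : ℕ) : ℤ)| : ℤ) : ℝ) := by exact_mod_cast hZ
          _ = |((j a : ℕ) : ℝ) - ((j' a : ℕ) : ℝ)| := by push_cast; rfl
      calc 2 * ρ = 2 * ρ * 1 := by ring
        _ ≤ 2 * ρ * |((j a : ℕ) : ℝ) - ((j' a : ℕ) : ℝ)| := by nlinarith
        _ = |(v j - v j') i₀| := by
            rw [hco, abs_mul, abs_of_nonneg (by positivity : (0:ℝ) ≤ 2 * ρ)]
        _ ≤ ‖v j - v j'‖ := coord_le_norm n _ i₀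
    set A : Set (EuclideanSpace ℝ (Fin n)) := ball x ρ ∩ Ω₂ with hA
    have hAm : MeasurableSet A := measurableSet_ball.inter hΩ₂.measurableSet
    set B : (Fin k → Fin m) → Set (EuclideanSpace ℝ (Fin n)) :=
      fun j => (fun y => y - v j) ⁻¹' A with hB
    have hBm : ∀ j, MeasurableSet (B j) := fun j => hAm.preimage (measurable_sub_const (v j))
    have hginv : ∀ (j : Fin k → Fin m) z, g (z - v j) = g z := by
      intro j z
      have : f (z - v j) = f z := by
        apply hf
        intro i hi
        have h1 : (z - v j) i = z i - v j i := by simp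
        rw [h1, hv0 j i hi, sub_zero]
      simp [hg, this]
    have htrans : ∀ j, ∫⁻ z in B j, g z = ∫⁻ z in A, g z := by
      intro j
      rw [← lintegral_indicator (hBm j), ← lintegral_indicator hAm]
      have heq : ∀ z, (B j).indicator g z = A.indicator g (z - v j) := by
        intro z
        by_cases hz : z ∈ B j
        · rw [Set.indicator_of_mem hz, Set.indicator_of_mem (show z - v j ∈ A from hz), hginv]
        · rw [Set.indicator_of_notMem hz, Set.indicator_of_notMem (show z - v j ∉ A from hz)]
      calc ∫⁻ z, (B j).indicator g z = ∫⁻ z, A.indicator g (z - v j) := lintegral_congr heq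
        _ = ∫⁻ z, A.indicator g z := by
            simpa [sub_eq_add_neg] using lintegral_add_right_eq_self (A.indicator g) (-(v j))
    have hdisj : Pairwise (Function.onFun Disjoint B) := by
      intro j j' hne
      rw [Function.onFun, Set.disjoint_left]
      intro y hyj hyj'
      have h1 : y - v j ∈ ball x ρ := hyj.1
      have h2 : y - v j' ∈ ball x ρ := hyj'.1
      have h3 : dist (y - v j) (y - v j') < 2 * ρ := by
        calc dist (y - v j) (y - v j') ≤ dist (y - v j) x + dist x (y - v j') := dist_triangle _ _ _
          _ < ρ + ρ := by
              rw [dist_comm x]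
              have := mem_ball.mp h1
              have := mem_ball.mp h2
              linarith
          _ = 2 * ρ := by ring
      have h4 : dist (y - v j) (y - v j') = ‖v j' - v j‖ := by
        rw [dist_eq_norm]; congr 1; abel
      have h5 := hsep j' j (Ne.symm hne)
      rw [h4] at h3
      linarith
    have hsub₁ : ∀ j, B j ⊆ Ω₁ := by
      intro j y hy
      apply hthick
      rw [Metric.mem_thickening_iff]
      refine ⟨y - v j, subset_closure hy.2, ?_⟩
      have h1 : dist y (y - v j) = ‖v j‖ := by
        rw [dist_eq_norm]; congr 1; abel
      rw [h1]
      linarith [hnorm j]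
    have hcount : ((m : ℝ≥0∞) ^ k) * ∫⁻ z in A, g z ≤ ∫⁻ z in Ω₁, g z := by
      have hsum : ∑ j : Fin k → Fin m, ∫⁻ z in B j, g z =
          ((m : ℝ≥0∞) ^ k) * ∫⁻ z in A, g z := by
        rw [Finset.sum_congr rfl (fun j _ => htrans j), Finset.sum_const]
        simp [Fintype.card_fun, mul_comm]
      calc ((m : ℝ≥0∞) ^ k) * ∫⁻ z in A, g z = ∑ j : Fin k → Fin m, ∫⁻ z in B j, g z :=
            hsum.symm
        _ = ∫⁻ z in ⋃ j, B j, g z := by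
            rw [lintegral_iUnion hBm hdisj, tsum_fintype]
        _ ≤ ∫⁻ z in Ω₁, g z := lintegral_mono_set (Set.iUnion_subset hsub₁)
    have hreal : ρ ^ ((d : ℝ) - n) ≤ (4 * s / ε) ^ k * (m : ℝ) ^ k := by
      have hexp : ((d : ℝ) - n) = -(k : ℝ) := by
        rw [hk]; push_cast [Nat.cast_sub hd]; ring
      rw [hexp, Real.rpow_neg hρ.le, Real.rpow_natCast]
      have h1 : (1 : ℝ) ≤ ρ * ((4 * s / ε) * m) := by
        rw [show ρ * ((4 * s / ε) * m) = (ρ * m) * (4 * s) / ε by ring, le_div_iff₀ hε]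
        calc (1:ℝ) * ε = ε := by ring
          _ = (ε / (4 * s)) * (4 * s) := by field_simp
          _ ≤ (ρ * m) * (4 * s) := mul_le_mul_of_nonneg_right hρm (by positivity)
      have h3 : (1 : ℝ) ≤ ((4 * s / ε) * m) ^ k * ρ ^ k := by
        rw [← mul_pow]
        calc (1:ℝ) = 1 ^ k := (one_pow k).symm
          _ ≤ (4 * s / ε * ↑m * ρ) ^ k := by
              apply pow_le_pow_left₀ (by norm_num)
              nlinarith
      have h4 : (ρ ^ k)⁻¹ ≤ ((4 * s / ε) * m) ^ k := by
        rw [inv_le_iff_one_le_mul₀ (by positivity)]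
        linarith
      calc (ρ ^ k)⁻¹ ≤ ((4 * s / ε) * m) ^ k := h4
        _ = (4 * s / ε) ^ k * (m : ℝ) ^ k := mul_pow _ _ _
    calc ENNReal.ofReal (ρ ^ ((d : ℝ) - n)) * ∫⁻ z in A, g z
        ≤ ENNReal.ofReal ((4 * s / ε) ^ k * (m : ℝ) ^ k) * ∫⁻ z in A, g z :=
          mul_le_mul_left (ENNReal.ofReal_le_ofReal hreal) _
      _ = ENNReal.ofReal ((4 * s / ε) ^ k) * (((m : ℝ≥0∞) ^ k) * ∫⁻ z in A, g z) := by
          rw [ENNReal.ofReal_mul (by positivity), mul_assoc]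
          congr 2
          rw [← ENNReal.ofReal_natCast m, ← ENNReal.ofReal_pow (by positivity)]
      _ ≤ ENNReal.ofReal ((4 * s / ε) ^ k) * ∫⁻ z in Ω₁, g z :=
          mul_le_mul_right hcount _

theorem morreyNormOn_le_of_depends_on_first_coords'
    (n d : ℕ) (hd : d ≤ n) (p : ℝ) (hp : 1 ≤ p)
    (Ω₁ Ω₂ : Set (EuclideanSpace ℝ (Fin n)))
    (hΩ₁ : IsOpen Ω₁) (hΩ₂ : IsOpen Ω₂)
    (hcomp : IsCompact (closure Ω₂)) (hsub : closure Ω₂ ⊆ Ω₁) :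
    ∃ c : ℝ, 0 < c ∧ ∀ f : EuclideanSpace ℝ (Fin n) → ℝ,
      MemLp f (ENNReal.ofReal p) (volume.restrict Ω₁) →
      (∀ x y : EuclideanSpace ℝ (Fin n),
        (∀ i : Fin n, (i : ℕ) < d → x i = y i) → f x = f y) →
      (eLpNorm f (ENNReal.ofReal p) (volume.restrict Ω₂) ^ p +
        ⨆ (ρ : ℝ) (_ : ρ ∈ Set.Ioc (0 : ℝ) 1) (x : EuclideanSpace ℝ (Fin n)),
          ENNReal.ofReal (ρ ^ ((d:ℝ) - n)) *
            eLpNorm f (ENNReal.ofReal p) ((volume.restrict Ω₂).restrict (ball x ρ)) ^ p) ^ (1 / p) ≤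
        ENNReal.ofReal c * eLpNorm f (ENNReal.ofReal p) (volume.restrict Ω₁) := by
  obtain ⟨ε, hε, hthick⟩ := hcomp.exists_thickening_subset_open hΩ₁ hsub
  set C₁ : ℝ := (4 * Real.sqrt n / ε) ^ (n - d) with hC₁def
  have hC₁ : 0 ≤ C₁ := by positivity
  have hp0 : (0:ℝ) < p := by linarith
  refine ⟨(1 + C₁) ^ (1/p), Real.rpow_pos_of_pos (by linarith) _, ?_⟩
  intro f _hmem hf
  have hq0 : (ENNReal.ofReal p) ≠ 0 := by
    simp only [ne_eq, ENNReal.ofReal_eq_zero, not_le]; linarith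
  have hqt : (ENNReal.ofReal p) ≠ ⊤ := ENNReal.ofReal_ne_top
  have hqr : (ENNReal.ofReal p).toReal = p := ENNReal.toReal_ofReal hp0.le
  set J : ℝ≥0∞ := ∫⁻ z in Ω₁, (‖f z‖₊ : ℝ≥0∞) ^ p with hJ
  have hI : eLpNorm f (ENNReal.ofReal p) (volume.restrict Ω₁) = J ^ (1/p) := by
    rw [eLpNorm_eq_lintegral_rpow_enorm_toReal hq0 hqt, hqr]
    rfl
  have hΩ₂Ω₁ : Ω₂ ⊆ Ω₁ := subset_closure.trans hsub
  have hpow : ∀ μ : Measure (EuclideanSpace ℝ (Fin n)),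
      eLpNorm f (ENNReal.ofReal p) μ ^ p = ∫⁻ z, (‖f z‖₊ : ℝ≥0∞) ^ p ∂μ := by
    intro μ
    rw [eLpNorm_eq_lintegral_rpow_enorm_toReal hq0 hqt, hqr, ← ENNReal.rpow_mul, one_div,
      inv_mul_cancel₀ hp0.ne', ENNReal.rpow_one]
    rfl
  have h1 : eLpNorm f (ENNReal.ofReal p) (volume.restrict Ω₂) ^ p ≤ J := by
    rw [hpow]
    exact lintegral_mono_set hΩ₂Ω₁
  have h2 : (⨆ (ρ : ℝ) (_ : ρ ∈ Set.Ioc (0 : ℝ) 1) (x : EuclideanSpace ℝ (Fin n)),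
      ENNReal.ofReal (ρ ^ ((d:ℝ) - n)) *
        eLpNorm f (ENNReal.ofReal p) ((volume.restrict Ω₂).restrict (ball x ρ)) ^ p) ≤
      ENNReal.ofReal C₁ * J := by
    refine iSup_le fun ρ => iSup_le fun hρ => iSup_le fun x => ?_
    have hkey := key_ball n d hd p ε hε Ω₁ Ω₂ hΩ₂ hthick f hf ρ hρ.1 x
    rw [Measure.restrict_restrict measurableSet_ball, hpow]
    exact hkey
  calc (eLpNorm f (ENNReal.ofReal p) (volume.restrict Ω₂) ^ p +
        ⨆ (ρ : ℝ) (_ : ρ ∈ Set.Ioc (0 : ℝ) 1) (x : EuclideanSpace ℝ (Fin n)),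
          ENNReal.ofReal (ρ ^ ((d:ℝ) - n)) *
            eLpNorm f (ENNReal.ofReal p) ((volume.restrict Ω₂).restrict (ball x ρ)) ^ p) ^ (1 / p)
      ≤ (J + ENNReal.ofReal C₁ * J) ^ (1/p) := by
        apply ENNReal.rpow_le_rpow _ (by positivity)
        exact add_le_add h1 h2
    _ = ((1 + ENNReal.ofReal C₁) * J) ^ (1/p) := by rw [add_mul, one_mul]
    _ = (1 + ENNReal.ofReal C₁) ^ (1/p) * J ^ (1/p) :=
        ENNReal.mul_rpow_of_nonneg _ _ (by positivity)
    _ = ENNReal.ofReal ((1 + C₁) ^ (1/p)) * eLpNorm f (ENNReal.ofReal p) (volume.restrict Ω₁) := by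
        rw [hI]
        congr 1
        rw [← ENNReal.ofReal_one, ← ENNReal.ofReal_add one_pos.le hC₁,
          ENNReal.ofReal_rpow_of_pos (by linarith)]

/-- **Morrey bound for functions of `d` variables.**
Let `Ω₂ ⋐ Ω₁ ⊆ ℝⁿ` be open sets, `Ω₂` with compact closure contained in `Ω₁`, let
`0 ≤ d ≤ n` and `1 ≤ p < ∞`.  Then there is a constant `c > 0` (depending only on
`Ω₁, Ω₂, n, d, p`) such that every `f ∈ L^p(Ω₁)` depending only on the first `d`
coordinates lies in `L^p_d(Ω₂)` with `‖f‖_{L^p_d(Ω₂)} ≤ c ‖f‖_{L^p(Ω₁)}`. -/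
theorem morreyNormOn_le_of_depends_on_first_coords
    (n d : ℕ) (hd : d ≤ n) (p : ℝ) (hp : 1 ≤ p)
    (Ω₁ Ω₂ : Set (EuclideanSpace ℝ (Fin n)))
    (hΩ₁ : IsOpen Ω₁) (hΩ₂ : IsOpen Ω₂)
    (hcomp : IsCompact (closure Ω₂)) (hsub : closure Ω₂ ⊆ Ω₁) :
    ∃ c : ℝ, 0 < c ∧ ∀ f : EuclideanSpace ℝ (Fin n) → ℝ,
      MemLp f (ENNReal.ofReal p) (volume.restrict Ω₁) →
      (∀ x y : EuclideanSpace ℝ (Fin n),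
        (∀ i : Fin n, (i : ℕ) < d → x i = y i) → f x = f y) →
      morreyNormOn n p d Ω₂ f ≤
        ENNReal.ofReal c * eLpNorm f (ENNReal.ofReal p) (volume.restrict Ω₁) := by
  obtain ⟨c, hc, H⟩ := morreyNormOn_le_of_depends_on_first_coords' n d hd p hp Ω₁ Ω₂ hΩ₁ hΩ₂
    hcomp hsub
  refine ⟨c, hc, fun f hmem hf => ?_⟩
  unfold morreyNormOn
  exact H f hmem hf
end
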